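/- (Averaging step for the second generalized distance.) Let n ≥ 1, d ≥ 1, let F be a nonempty finite family of F_2-subspaces of F_2^n, and let B ≥ 1 be a natural number such that every unordered pair of distinct nonzero vectors of F_2^n, each of even Hamming weight, is contained in exactly B members of F. If B · (1/8)·Σ_{t=1}^{d−1} C(n,t)·(3^t + 1) ≤ |F|/n, then the number of members C ∈ F containing some pair of distinct nonzero even-weight vectors u, v with |supp(u) ∪ supp(v)| ≤ d − 1 is at most |F|/n; in particular, at least (1 − 1/n)·|F| members of F have second generalized distance at least d when restricted to even-weight codewords. -/

import Mathlib

open scoped Classical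

/-- The support of a vector in `F_2^n`: the set of coordinates where it is nonzero. -/
def supp {n : ℕ} (u : Fin n → ZMod 2) : Finset (Fin n) :=
  Finset.univ.filter fun i => u i ≠ 0

namespace VGAux

variable {n : ℕ}

lemma mem_supp {u : Fin n → ZMod 2} {i : Fin n} : i ∈ supp u ↔ u i ≠ 0 := by
  simp [supp]

lemma supp_injective : Function.Injective (supp (n := n)) := by
  intro u v h
  funext i
  have hi := Finset.ext_iff.mp h i
  simp only [mem_supp] at hi
  have h2 : ∀ a b : ZMod 2, (a ≠ 0 ↔ b ≠ 0) → a = b := by decide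
  exact h2 _ _ hi

lemma supp_card (u : Fin n → ZMod 2) : (supp u).card = hammingNorm u := by
  simp [supp, hammingNorm]

lemma supp_add_subset (u v : Fin n → ZMod 2) : supp (u + v) ⊆ supp u ∪ supp v := by
  intro i hi
  rw [Finset.mem_union, mem_supp, mem_supp]
  rw [mem_supp] at hi
  by_contra hc
  push_neg at hc
  exact hi (by show u i + v i = 0; rw [hc.1, hc.2, add_zero])

lemma supp_add_eq (u v : Fin n → ZMod 2) :
    supp (u + v) = (supp u ∪ supp v) \ (supp u ∩ supp v) := by
  ext i
  simp only [Finset.mem_sdiff, Finset.mem_union, Finset.mem_inter, mem_supp, Pi.add_apply]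
  have h2 : ∀ a b : ZMod 2, (a + b ≠ 0 ↔ (a ≠ 0 ∨ b ≠ 0) ∧ ¬(a ≠ 0 ∧ b ≠ 0)) := by decide
  exact h2 (u i) (v i)

lemma even_hamming_add {u v : Fin n → ZMod 2} (hu : Even (hammingNorm u))
    (hv : Even (hammingNorm v)) : Even (hammingNorm (u + v)) := by
  rw [← supp_card] at hu hv ⊢
  rw [supp_add_eq]
  have hsub : supp u ∩ supp v ⊆ supp u ∪ supp v :=
    Finset.inter_subset_left.trans Finset.subset_union_left
  rw [Finset.card_sdiff_of_subset hsub, Nat.even_sub (Finset.card_le_card hsub)]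
  have h1 : (supp u ∪ supp v).card + (supp u ∩ supp v).card
      = (supp u).card + (supp v).card := Finset.card_union_add_card_inter _ _
  exact Nat.even_add.mp (h1 ▸ hu.add hv)

lemma eq_of_add_eq_zero' {u v : Fin n → ZMod 2} (h : u + v = 0) : u = v := by
  funext i
  have := congrFun h i
  have h2 : ∀ a b : ZMod 2, a + b = 0 → a = b := by decide
  exact h2 _ _ this

lemma ne_add_right {u v : Fin n → ZMod 2} (hv : v ≠ 0) : u ≠ u + v := by
  intro h
  apply hv
  funext i
  have := congrFun h i
  have h2 : ∀ a b : ZMod 2, a = a + b → b = 0 := by decide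
  exact h2 _ _ this

lemma supp_nonempty {u : Fin n → ZMod 2} (hu : u ≠ 0) : (supp u).Nonempty := by
  obtain ⟨i, hi⟩ := Function.ne_iff.mp hu
  exact ⟨i, mem_supp.mpr hi⟩

lemma sum_even_pow_le (S : Finset (Fin n)) :
    2 * ∑ A ∈ S.powerset.filter (fun A => Even A.card), 2 ^ A.card ≤ 3 ^ S.card + 1 := by
  have key : ∀ x : ℤ, ∑ A ∈ S.powerset, x ^ A.card = (x + 1) ^ S.card := by
    intro x
    have h := Finset.prod_add (fun _ : Fin n => x) (fun _ => (1:ℤ)) S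
    simp [Finset.prod_const] at h
    rw [← h]
  have h3 := key 2
  have hneg := key (-2)
  norm_num at h3 hneg
  have hsplit : ∑ A ∈ S.powerset, ((2:ℤ) ^ A.card + (-2) ^ A.card)
      = 2 * ∑ A ∈ S.powerset.filter (fun A => Even A.card), (2:ℤ) ^ A.card := by
    rw [← Finset.sum_filter_add_sum_filter_not S.powerset (fun A => Even A.card)
      (fun A => (2:ℤ) ^ A.card + (-2) ^ A.card)]
    have e1 : ∑ A ∈ S.powerset.filter (fun A => Even A.card),
        ((2:ℤ) ^ A.card + (-2) ^ A.card)
        = ∑ A ∈ S.powerset.filter (fun A => Even A.card), 2 * (2:ℤ) ^ A.card := by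
      refine Finset.sum_congr rfl fun A hA => ?_
      rw [(Finset.mem_filter.mp hA).2.neg_pow]; ring
    have e2 : ∑ A ∈ S.powerset.filter (fun A => ¬ Even A.card),
        ((2:ℤ) ^ A.card + (-2) ^ A.card) = 0 := by
      refine Finset.sum_eq_zero fun A hA => ?_
      rw [(Nat.not_even_iff_odd.mp (Finset.mem_filter.mp hA).2).neg_pow]; ring
    rw [e1, e2, add_zero, ← Finset.mul_sum]
  have hZ : 2 * ∑ A ∈ S.powerset.filter (fun A => Even A.card), (2:ℤ) ^ A.card
      ≤ 3 ^ S.card + 1 := by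
    rw [← hsplit, Finset.sum_add_distrib, h3, hneg]
    have : ((-1:ℤ)) ^ S.card ≤ 1 := by
      rcases neg_one_pow_eq_or ℤ S.card with h | h <;> rw [h] <;> norm_num
    linarith
  exact_mod_cast (by push_cast; exact hZ :
    ((2 * ∑ A ∈ S.powerset.filter (fun A => Even A.card), 2 ^ A.card : ℕ) : ℤ) ≤ 3 ^ S.card + 1)

lemma countS (S : Finset (Fin n)) :
    2 * (Finset.univ.filter (fun p : (Fin n → ZMod 2) × (Fin n → ZMod 2) =>
      Even (hammingNorm p.1) ∧ supp p.1 ∪ supp p.2 = S)).card ≤ 3 ^ S.card + 1 := by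
  set E := Finset.univ.filter (fun p : (Fin n → ZMod 2) × (Fin n → ZMod 2) =>
    Even (hammingNorm p.1) ∧ supp p.1 ∪ supp p.2 = S) with hE
  have hmaps : ∀ p ∈ E, supp p.1 ∈ S.powerset.filter (fun A => Even A.card) := by
    intro p hp
    rw [hE, Finset.mem_filter] at hp
    rw [Finset.mem_filter, Finset.mem_powerset]
    refine ⟨?_, by rw [supp_card]; exact hp.2.1⟩
    rw [← hp.2.2]; exact Finset.subset_union_left
  have hcard := Finset.card_eq_sum_card_fiberwise hmaps
  have hfib : ∀ A ∈ S.powerset.filter (fun A => Even A.card),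
      (E.filter (fun p => supp p.1 = A)).card ≤ 2 ^ A.card := by
    intro A hA
    rw [← Finset.card_powerset]
    apply Finset.card_le_card_of_injOn (fun p => supp p.2 ∩ A)
    · intro p _
      rw [Finset.mem_coe, Finset.mem_powerset]
      exact Finset.inter_subset_right
    · intro p hp q hq heq
      rw [Finset.mem_coe, Finset.mem_filter, hE, Finset.mem_filter] at hp hq
      have key : ∀ r : (Fin n → ZMod 2) × (Fin n → ZMod 2),
          supp r.1 ∪ supp r.2 = S → supp r.1 = A →
          supp r.2 = (S \ A) ∪ (supp r.2 ∩ A) := by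
        intro r hr h1
        ext i
        simp only [Finset.mem_union, Finset.mem_sdiff, Finset.mem_inter]
        constructor
        · intro hi
          by_cases hiA : i ∈ A
          · exact Or.inr ⟨hi, hiA⟩
          · exact Or.inl ⟨hr ▸ Finset.mem_union_right _ hi, hiA⟩
        · rintro (⟨hiS, hiA⟩ | ⟨hi, _⟩)
          · rcases Finset.mem_union.mp (hr ▸ hiS) with h | h
            · exact absurd (h1 ▸ h) hiA
            · exact h
          · exact hi
      have h2 : supp p.2 = supp q.2 := by
        rw [key p hp.1.2.2 hp.2, key q hq.1.2.2 hq.2]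
        simp only at heq
        rw [heq]
      have h1 : supp p.1 = supp q.1 := by rw [hp.2, hq.2]
      exact Prod.ext (supp_injective h1) (supp_injective h2)
  calc 2 * E.card = 2 * ∑ A ∈ S.powerset.filter (fun A => Even A.card),
          (E.filter (fun p => supp p.1 = A)).card := by rw [hcard]
    _ ≤ 2 * ∑ A ∈ S.powerset.filter (fun A => Even A.card), 2 ^ A.card := by
        exact Nat.mul_le_mul_left 2 (Finset.sum_le_sum hfib)
    _ ≤ 3 ^ S.card + 1 := sum_even_pow_le S

/-- The set of ordered bad pairs. -/
noncomputable def badPairs (n d : ℕ) : Finset ((Fin n → ZMod 2) × (Fin n → ZMod 2)) :=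
  Finset.univ.filter (fun p => p.1 ≠ p.2 ∧ p.1 ≠ 0 ∧ p.2 ≠ 0 ∧
    Even (hammingNorm p.1) ∧ Even (hammingNorm p.2) ∧ (supp p.1 ∪ supp p.2).card ≤ d - 1)

lemma badPairs_bound (d : ℕ) :
    2 * (badPairs n d).card ≤ ∑ t ∈ Finset.Icc 1 (d - 1), n.choose t * (3 ^ t + 1) := by
  set 𝒮 : Finset (Finset (Fin n)) :=
    Finset.univ.filter (fun S => 1 ≤ S.card ∧ S.card ≤ d - 1) with h𝒮
  have hmaps : ∀ p ∈ badPairs n d, supp p.1 ∪ supp p.2 ∈ 𝒮 := by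
    intro p hp
    rw [badPairs, Finset.mem_filter] at hp
    rw [h𝒮, Finset.mem_filter]
    refine ⟨Finset.mem_univ _, ?_, hp.2.2.2.2.2.2⟩
    have h1 := supp_nonempty hp.2.2.1
    exact Finset.card_pos.mpr (h1.mono Finset.subset_union_left)
  have hcard := Finset.card_eq_sum_card_fiberwise hmaps
  have hfib : ∀ S ∈ 𝒮, 2 * ((badPairs n d).filter
      (fun p => supp p.1 ∪ supp p.2 = S)).card ≤ 3 ^ S.card + 1 := by
    intro S _
    refine le_trans (Nat.mul_le_mul_left 2 (Finset.card_le_card ?_)) (countS S)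
    intro p hp
    rw [Finset.mem_filter, badPairs, Finset.mem_filter] at hp
    rw [Finset.mem_filter]
    exact ⟨Finset.mem_univ _, hp.1.2.2.2.2.1, hp.2⟩
  have step1 : 2 * (badPairs n d).card ≤ ∑ S ∈ 𝒮, (3 ^ S.card + 1) := by
    rw [hcard, Finset.mul_sum]
    exact Finset.sum_le_sum hfib
  refine le_trans step1 (le_of_eq ?_)
  have hmaps2 : ∀ S ∈ 𝒮, S.card ∈ Finset.Icc 1 (d - 1) := by
    intro S hS
    rw [h𝒮, Finset.mem_filter] at hS
    exact Finset.mem_Icc.mpr hS.2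
  rw [← Finset.sum_fiberwise_of_maps_to hmaps2 (fun S => 3 ^ S.card + 1)]
  refine Finset.sum_congr rfl fun t ht => ?_
  rw [Finset.mem_Icc] at ht
  have hset : 𝒮.filter (fun S => S.card = t) = Finset.powersetCard t Finset.univ := by
    ext S
    simp only [h𝒮, Finset.mem_filter, Finset.mem_univ, true_and, Finset.mem_powersetCard,
      Finset.subset_univ]
    constructor
    · rintro ⟨_, h⟩; exact h
    · intro h; exact ⟨⟨h ▸ ht.1, h ▸ ht.2⟩, h⟩
  have : ∑ S ∈ 𝒮.filter (fun S => S.card = t), (3 ^ S.card + 1)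
      = ∑ S ∈ 𝒮.filter (fun S => S.card = t), (3 ^ t + 1) := by
    refine Finset.sum_congr rfl fun S hS => ?_
    rw [(Finset.mem_filter.mp hS).2]
  rw [this, Finset.sum_const, hset, Finset.card_powersetCard, Finset.card_univ,
    Fintype.card_fin, smul_eq_mul]

lemma six_le {d : ℕ} (C : Submodule (ZMod 2) (Fin n → ZMod 2))
    (u v : Fin n → ZMod 2) (huC : u ∈ C) (hvC : v ∈ C) (huv : u ≠ v)
    (hu0 : u ≠ 0) (hv0 : v ≠ 0) (heu : Even (hammingNorm u)) (hev : Even (hammingNorm v))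
    (hle : (supp u ∪ supp v).card ≤ d - 1) :
    6 ≤ ((badPairs n d).filter (fun p => p.1 ∈ C ∧ p.2 ∈ C)).card := by
  set w := u + v with hw
  have hw0 : w ≠ 0 := fun h => huv (eq_of_add_eq_zero' h)
  have huw : u ≠ w := ne_add_right hv0
  have hvw : v ≠ w := by
    rw [hw, add_comm]
    exact ne_add_right hu0
  have hwC : w ∈ C := C.add_mem huC hvC
  have hwe : Even (hammingNorm w) := even_hamming_add heu hev
  have hws : supp w ⊆ supp u ∪ supp v := supp_add_subset u v
  set s : Finset (Fin n → ZMod 2) := {u, v, w} with hs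
  have hmem : ∀ x ∈ s, x ≠ 0 ∧ Even (hammingNorm x) ∧ x ∈ C ∧
      supp x ⊆ supp u ∪ supp v := by
    intro x hx
    rw [hs] at hx
    simp only [Finset.mem_insert, Finset.mem_singleton] at hx
    rcases hx with rfl | rfl | rfl
    · exact ⟨hu0, heu, huC, Finset.subset_union_left⟩
    · exact ⟨hv0, hev, hvC, Finset.subset_union_right⟩
    · exact ⟨hw0, hwe, hwC, hws⟩
  have hcard3 : s.card = 3 := by
    rw [hs, Finset.card_insert_of_notMem, Finset.card_insert_of_notMem,
      Finset.card_singleton]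
    · simp [hvw]
    · simp [huv, huw]
  have hsub : s.offDiag ⊆ (badPairs n d).filter (fun p => p.1 ∈ C ∧ p.2 ∈ C) := by
    intro p hp
    rw [Finset.mem_offDiag] at hp
    obtain ⟨h1, h2, h3⟩ := hp
    obtain ⟨h10, h1e, h1C, h1s⟩ := hmem _ h1
    obtain ⟨h20, h2e, h2C, h2s⟩ := hmem _ h2
    rw [Finset.mem_filter, badPairs, Finset.mem_filter]
    refine ⟨⟨Finset.mem_univ _, h3, h10, h20, h1e, h2e, ?_⟩, h1C, h2C⟩
    exact le_trans (Finset.card_le_card (Finset.union_subset h1s h2s)) hle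
  have : s.offDiag.card = 6 := by rw [Finset.offDiag_card, hcard3]
  calc 6 = s.offDiag.card := this.symm
    _ ≤ _ := Finset.card_le_card hsub

end VGAux

theorem vg_averaging_second_distance (n d : ℕ) (hn : 1 ≤ n) (hd : 1 ≤ d)
    (F : Finset (Submodule (ZMod 2) (Fin n → ZMod 2))) (hF : F.Nonempty)
    (B : ℕ) (hB1 : 1 ≤ B)
    (hB : ∀ u v : Fin n → ZMod 2, u ≠ v → u ≠ 0 → v ≠ 0 →
      Even (hammingNorm u) → Even (hammingNorm v) →
      (F.filter (fun C => u ∈ C ∧ v ∈ C)).card = B)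
    (hcount : (B : ℚ) * ((1 : ℚ) / 8) *
        ∑ t ∈ Finset.Icc 1 (d - 1), (n.choose t : ℚ) * ((3 : ℚ) ^ t + 1)
      ≤ (F.card : ℚ) / n) :
    ((F.filter (fun C => ∃ u v : Fin n → ZMod 2, u ∈ C ∧ v ∈ C ∧ u ≠ v ∧
        u ≠ 0 ∧ v ≠ 0 ∧ Even (hammingNorm u) ∧ Even (hammingNorm v) ∧
        (supp u ∪ supp v).card ≤ d - 1)).card : ℚ) ≤ (F.card : ℚ) / n ∧
    (1 - 1 / (n : ℚ)) * (F.card : ℚ) ≤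
      ((F.filter (fun C => ∀ u ∈ C, ∀ v ∈ C, u ≠ v → u ≠ 0 → v ≠ 0 →
        Even (hammingNorm u) → Even (hammingNorm v) →
        d ≤ (supp u ∪ supp v).card)).card : ℚ) := by
  classical
  set badF := F.filter (fun C => ∃ u v : Fin n → ZMod 2, u ∈ C ∧ v ∈ C ∧ u ≠ v ∧
      u ≠ 0 ∧ v ≠ 0 ∧ Even (hammingNorm u) ∧ Even (hammingNorm v) ∧
      (supp u ∪ supp v).card ≤ d - 1) with hbadF
  set P := VGAux.badPairs n d with hP
  set K := ∑ t ∈ Finset.Icc 1 (d - 1), n.choose t * (3 ^ t + 1) with hK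
  -- step 1: 6 * badF.card ≤ P.card * B
  have h6 : ∀ C ∈ badF, 6 ≤ (P.filter (fun p => p.1 ∈ C ∧ p.2 ∈ C)).card := by
    intro C hC
    rw [hbadF, Finset.mem_filter] at hC
    obtain ⟨_, u, v, huC, hvC, huv, hu0, hv0, heu, hev, hle⟩ := hC
    exact VGAux.six_le C u v huC hvC huv hu0 hv0 heu hev hle
  have hdc : 6 * badF.card ≤ ∑ C ∈ badF, (P.filter (fun p => p.1 ∈ C ∧ p.2 ∈ C)).card := by
    have := Finset.card_nsmul_le_sum badF
      (fun C => (P.filter (fun p => p.1 ∈ C ∧ p.2 ∈ C)).card) 6 h6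
    simpa [mul_comm] using this
  have hswap : ∑ C ∈ badF, (P.filter (fun p => p.1 ∈ C ∧ p.2 ∈ C)).card
      = ∑ p ∈ P, (badF.filter (fun C => p.1 ∈ C ∧ p.2 ∈ C)).card := by
    simp only [Finset.card_filter]
    exact Finset.sum_comm
  have hle : ∀ p ∈ P, (badF.filter (fun C => p.1 ∈ C ∧ p.2 ∈ C)).card ≤ B := by
    intro p hp
    rw [hP, VGAux.badPairs, Finset.mem_filter] at hp
    obtain ⟨_, h1, h2, h3, h4, h5, _⟩ := hp
    calc (badF.filter (fun C => p.1 ∈ C ∧ p.2 ∈ C)).card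
        ≤ (F.filter (fun C => p.1 ∈ C ∧ p.2 ∈ C)).card :=
          Finset.card_le_card (Finset.filter_subset_filter _ (Finset.filter_subset _ _))
      _ = B := hB p.1 p.2 h1 h2 h3 h4 h5
  have hstep1 : 6 * badF.card ≤ P.card * B := by
    calc 6 * badF.card ≤ ∑ p ∈ P, (badF.filter (fun C => p.1 ∈ C ∧ p.2 ∈ C)).card :=
          hswap ▸ hdc
      _ ≤ ∑ _p ∈ P, B := Finset.sum_le_sum hle
      _ = P.card * B := by rw [Finset.sum_const, smul_eq_mul]
  have hstep2 : 2 * P.card ≤ K := VGAux.badPairs_bound d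
  have h12 : 12 * badF.card ≤ K * B := by
    calc 12 * badF.card = 2 * (6 * badF.card) := by ring
      _ ≤ 2 * (P.card * B) := Nat.mul_le_mul_left 2 hstep1
      _ = (2 * P.card) * B := by ring
      _ ≤ K * B := Nat.mul_le_mul_right B hstep2
  -- rationals
  have hKcast : ((K : ℕ) : ℚ)
      = ∑ t ∈ Finset.Icc 1 (d - 1), (n.choose t : ℚ) * ((3 : ℚ) ^ t + 1) := by
    rw [hK]
    push_cast
    ring
  have hfn : (0 : ℚ) ≤ (F.card : ℚ) / n := by positivity
  have hbad_le : (badF.card : ℚ) ≤ (F.card : ℚ) / n := by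
    have h12q : (12 : ℚ) * badF.card ≤ (K : ℚ) * B := by exact_mod_cast h12
    have hcq : (B : ℚ) * ((1 : ℚ) / 8) * (K : ℚ) ≤ (F.card : ℚ) / n := by
      rw [hKcast]; exact hcount
    have hKB : (K : ℚ) * B = 8 * ((B : ℚ) * ((1 : ℚ) / 8) * (K : ℚ)) := by ring
    linarith
  constructor
  · exact hbad_le
  · -- second part
    set goodF := F.filter (fun C => ∀ u ∈ C, ∀ v ∈ C, u ≠ v → u ≠ 0 → v ≠ 0 →
        Even (hammingNorm u) → Even (hammingNorm v) →
        d ≤ (supp u ∪ supp v).card) with hgoodF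
    have hsub : F.filter (fun C => ¬ ∃ u v : Fin n → ZMod 2, u ∈ C ∧ v ∈ C ∧ u ≠ v ∧
        u ≠ 0 ∧ v ≠ 0 ∧ Even (hammingNorm u) ∧ Even (hammingNorm v) ∧
        (supp u ∪ supp v).card ≤ d - 1) ⊆ goodF := by
      intro C hC
      rw [Finset.mem_filter] at hC
      rw [hgoodF, Finset.mem_filter]
      refine ⟨hC.1, ?_⟩
      intro u huC v hvC huv hu0 hv0 heu hev
      by_contra hlt
      push_neg at hlt
      exact hC.2 ⟨u, v, huC, hvC, huv, hu0, hv0, heu, hev, Nat.le_sub_one_of_lt hlt⟩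
    have hpart : badF.card + (F.filter (fun C => ¬ ∃ u v : Fin n → ZMod 2, u ∈ C ∧ v ∈ C ∧
        u ≠ v ∧ u ≠ 0 ∧ v ≠ 0 ∧ Even (hammingNorm u) ∧ Even (hammingNorm v) ∧
        (supp u ∪ supp v).card ≤ d - 1)).card = F.card :=
      Finset.card_filter_add_card_filter_not _
    have hgood_ge : (F.card : ℚ) - badF.card ≤ goodF.card := by
      have h1 : (F.filter (fun C => ¬ ∃ u v : Fin n → ZMod 2, u ∈ C ∧ v ∈ C ∧ u ≠ v ∧
          u ≠ 0 ∧ v ≠ 0 ∧ Even (hammingNorm u) ∧ Even (hammingNorm v) ∧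
          (supp u ∪ supp v).card ≤ d - 1)).card ≤ goodF.card := Finset.card_le_card hsub
    -- cast
      have := hpart
      have hq : (badF.card : ℚ) + (F.filter (fun C => ¬ ∃ u v : Fin n → ZMod 2, u ∈ C ∧
          v ∈ C ∧ u ≠ v ∧ u ≠ 0 ∧ v ≠ 0 ∧ Even (hammingNorm u) ∧ Even (hammingNorm v) ∧
          (supp u ∪ supp v).card ≤ d - 1)).card = (F.card : ℚ) := by exact_mod_cast this
      have h1q : ((F.filter (fun C => ¬ ∃ u v : Fin n → ZMod 2, u ∈ C ∧ v ∈ C ∧ u ≠ v ∧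
          u ≠ 0 ∧ v ≠ 0 ∧ Even (hammingNorm u) ∧ Even (hammingNorm v) ∧
          (supp u ∪ supp v).card ≤ d - 1)).card : ℚ) ≤ (goodF.card : ℚ) := by
        exact_mod_cast h1
      linarith
    have hn0 : (n : ℚ) ≠ 0 := by
      have : (0 : ℚ) < n := by exact_mod_cast hn
      exact ne_of_gt this
    have hexp : (1 - 1 / (n : ℚ)) * (F.card : ℚ) = (F.card : ℚ) - (F.card : ℚ) / n := by
      field_simp
    rw [hexp]
    linarith
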